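/- For any distinct indices i_2,...,i_k ∈ {1,...,n} and every point z of U, the invariance identity ∑_{j=1}^n d_{j,i_2,...,i_k} · (∂L/∂z_j)(z) = 0 holds (the terms with j ∈ {i_2,...,i_k} vanish since then d_{j,i_2,...,i_k} = 0). -/

import Mathlib

noncomputable section

/-- The determinant `d_{l 1, …, l k}` of the `k × k` matrix whose `m`-th column consists of
`b (l m) 1, …, b (l m) k`. -/
def dd {n k : ℕ} (b : Fin n → Fin k → ℂ) (l : Fin k → Fin n) : ℂ :=
  Matrix.det (Matrix.of fun j m => b (l m) j)

/-- `f_{i_1,…,i_{k+1}}(z) = ∑_{l=1}^{k+1} (-1)^{l-1} d_{i_1,…,î_l,…,i_{k+1}} z_{i_l}`. -/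
def fF {n k : ℕ} (b : Fin n → Fin k → ℂ) (z : Fin n → ℂ) (I : Fin (k + 1) → Fin n) : ℂ :=
  ∑ l : Fin (k + 1), (-1) ^ (l : ℕ) * dd b (I ∘ l.succAbove) * z (I l)

/-- The discriminant `Δ ⊂ ℂⁿ`, the union over `1 ≤ i_1 < … < i_{k+1} ≤ n` of the zero sets of
the `f_{i_1,…,i_{k+1}}`. -/
def discr {n k : ℕ} (b : Fin n → Fin k → ℂ) : Set (Fin n → ℂ) :=
  {z | ∃ I : Fin (k + 1) → Fin n, StrictMono I ∧ fF b z I = 0}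

/-- The potential
`L(z) = (1/(2k)!) ∑_{1 ≤ i_1 < … < i_{k+1} ≤ n}
  (∏_{m=1}^{k+1} a_{i_m}/d_{i_1,…,î_m,…,i_{k+1}}²) f_{i_1,…,i_{k+1}}(z)^{2k}
  log f_{i_1,…,i_{k+1}}(z)`,
where `lg s` is the chosen holomorphic branch of `log f_{i_1,…,i_{k+1}}` attached to the
`(k+1)`-element subset `s = {i_1 < … < i_{k+1}}`. -/
def Lfun {n k : ℕ} (a : Fin n → ℂ) (b : Fin n → Fin k → ℂ)
    (lg : {s : Finset (Fin n) // s.card = k + 1} → (Fin n → ℂ) → ℂ)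
    (z : Fin n → ℂ) : ℂ :=
  (((2 * k).factorial : ℂ))⁻¹ *
    ∑ s : {s : Finset (Fin n) // s.card = k + 1},
      (∏ m : Fin (k + 1),
        a (s.1.orderEmbOfFin s.2 m) / (dd b (⇑(s.1.orderEmbOfFin s.2) ∘ m.succAbove)) ^ 2) *
      (fF b z ⇑(s.1.orderEmbOfFin s.2)) ^ (2 * k) * lg s z

lemma sumA {n k : ℕ} (b : Fin n → Fin (k+1) → ℂ) (J : Fin (k+2) → Fin n) (j : Fin (k+1)) :
    ∑ l : Fin (k+2), (-1:ℂ)^(l:ℕ) * dd b (J ∘ l.succAbove) * b (J l) j = 0 := by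
  have h0 : (Matrix.of fun i m => b (J m) ((Fin.cons j id : Fin (k+2) → Fin (k+1)) i) :
      Matrix (Fin (k+2)) (Fin (k+2)) ℂ).det = 0 := by
    apply Matrix.det_zero_of_row_eq (i := 0) (j := j.succ) (Fin.succ_ne_zero j).symm
    funext m; simp
  rw [Matrix.det_succ_row_zero] at h0
  rw [← h0]
  apply Finset.sum_congr rfl; intro l _
  have : dd b (J ∘ l.succAbove) =
      Matrix.det ((Matrix.of fun i m => b (J m) ((Fin.cons j id : Fin (k+2) → Fin (k+1)) i) :
        Matrix (Fin (k+2)) (Fin (k+2)) ℂ).submatrix Fin.succ l.succAbove) := by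
    unfold dd; congr 1
  rw [this]; simp [Matrix.of_apply]; ring

lemma sumB {n k' : ℕ} (b : Fin n → Fin (k'+1) → ℂ) (J : Fin (k'+2) → Fin n) (I : Fin k' → Fin n) :
    ∑ l : Fin (k'+2), (-1:ℂ)^(l:ℕ) * dd b (J ∘ l.succAbove) * dd b (Fin.cons (J l) I) = 0 := by
  have expand : ∀ x : Fin n, dd b (Fin.cons x I) =
      ∑ i : Fin (k'+1), (-1:ℂ)^(i:ℕ) * b x i *
        (Matrix.det (Matrix.of fun p q => b (I q) (i.succAbove p))) := by
    intro x
    rw [dd, Matrix.det_succ_column_zero]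
    rfl
  calc ∑ l : Fin (k'+2), (-1:ℂ)^(l:ℕ) * dd b (J ∘ l.succAbove) * dd b (Fin.cons (J l) I)
      = ∑ l : Fin (k'+2), ∑ i : Fin (k'+1),
          ((-1:ℂ)^(i:ℕ) * Matrix.det (Matrix.of fun p q => b (I q) (i.succAbove p))) *
          ((-1:ℂ)^(l:ℕ) * dd b (J ∘ l.succAbove) * b (J l) i) := by
        apply Finset.sum_congr rfl; intro l _
        rw [expand, Finset.mul_sum]
        apply Finset.sum_congr rfl; intro i _; ring
    _ = ∑ i : Fin (k'+1),
          ((-1:ℂ)^(i:ℕ) * Matrix.det (Matrix.of fun p q => b (I q) (i.succAbove p))) *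
          ∑ l : Fin (k'+2), ((-1:ℂ)^(l:ℕ) * dd b (J ∘ l.succAbove) * b (J l) i) := by
        rw [Finset.sum_comm]; simp [Finset.mul_sum]
    _ = 0 := by simp [sumA]

lemma proj_hasFDerivAt' {n : ℕ} (i : Fin n) (z : Fin n → ℂ) :
    HasFDerivAt (fun w : Fin n → ℂ => w i)
      (ContinuousLinearMap.proj (R := ℂ) (φ := fun _ : Fin n => ℂ) i) z :=
  (ContinuousLinearMap.proj (R := ℂ) (φ := fun _ : Fin n => ℂ) i).hasFDerivAt

set_option maxHeartbeats 1000000 in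
/-- Fix `n > k ≥ 1` (here `k = k' + 1`), numbers `b_i^j` with all determinants
`d_{i_1,…,i_k}` (distinct indices) nonzero, and weights `a_i ∈ ℂ^×` with `|a| = ∑ a_i ≠ 0`.
Let `U ⊆ ℂⁿ − Δ` be a connected simply connected open set on which holomorphic branches
`lg s` of `log f_{i_1,…,i_{k+1}}` are chosen, and let `L` be the potential.  Then for any
distinct indices `i_2,…,i_k` (the tuple `I`) and every `z ∈ U`, the invariance identity
`∑_{j=1}^n d_{j,i_2,…,i_k} (∂L/∂z_j)(z) = 0` holds. -/
theorem stmt14 (n k' : ℕ) (hnk : k' + 1 < n) (b : Fin n → Fin (k' + 1) → ℂ)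
    (hd : ∀ l : Fin (k' + 1) → Fin n, Function.Injective l → dd b l ≠ 0)
    (a : Fin n → ℂ) (ha : ∀ i, a i ≠ 0) (hsum : ∑ i, a i ≠ 0)
    (U : Set (Fin n → ℂ)) (hUopen : IsOpen U) (hUconn : IsConnected U)
    (hUsc : SimplyConnectedSpace ↥U) (hUD : U ⊆ (discr b)ᶜ)
    (lg : {s : Finset (Fin n) // s.card = (k' + 1) + 1} → (Fin n → ℂ) → ℂ)
    (hlghol : ∀ s, DifferentiableOn ℂ (lg s) U)
    (hlg : ∀ s, ∀ z ∈ U, Complex.exp (lg s z) = fF b z ⇑(s.1.orderEmbOfFin s.2)) :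
    ∀ I : Fin k' → Fin n, Function.Injective I → ∀ z ∈ U,
      ∑ j : Fin n,
        dd b (Fin.cons j I) * fderiv ℂ (Lfun a b lg) z (Pi.single j 1) = 0 := by
  intro I hI z hz
  classical
  set J : {s : Finset (Fin n) // s.card = (k' + 1) + 1} → Fin (k' + 2) → Fin n := fun s => ⇑(s.1.orderEmbOfFin s.2) with hJ
  set c : {s : Finset (Fin n) // s.card = (k' + 1) + 1} → Fin (k' + 2) → ℂ :=
    fun s l => (-1 : ℂ) ^ (l : ℕ) * dd b (J s ∘ l.succAbove) with hc
  set D : {s : Finset (Fin n) // s.card = (k' + 1) + 1} → ((Fin n → ℂ) →L[ℂ] ℂ) := fun s =>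
    ∑ l : Fin (k' + 2), c s l • ContinuousLinearMap.proj (R := ℂ) (φ := fun _ : Fin n => ℂ)
      (J s l) with hD
  set C : {s : Finset (Fin n) // s.card = (k' + 1) + 1} → ℂ := fun s => ∏ m : Fin (k' + 2),
      a (s.1.orderEmbOfFin s.2 m) / (dd b (⇑(s.1.orderEmbOfFin s.2) ∘ m.succAbove)) ^ 2 with hC
  set K : ℕ := 2 * (k' + 1) with hKdef
  have hFd : ∀ s : {s : Finset (Fin n) // s.card = (k' + 1) + 1}, HasFDerivAt (fun w => fF b w (J s)) (D s) z := by
    intro s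
    have h1 : (fun w => fF b w (J s)) = fun w => ∑ l : Fin (k' + 2), c s l * w (J s l) := by
      funext w; rfl
    rw [h1, hD]
    exact HasFDerivAt.fun_sum fun l _ => (proj_hasFDerivAt' (J s l) z).const_mul (c s l)
  have hFz : ∀ s : {s : Finset (Fin n) // s.card = (k' + 1) + 1}, fF b z (J s) ≠ 0 := by
    intro s
    rw [← hlg s z hz]
    exact Complex.exp_ne_zero _
  have hlgd : ∀ s : {s : Finset (Fin n) // s.card = (k' + 1) + 1}, HasFDerivAt (lg s) ((fF b z (J s))⁻¹ • D s) z := by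
    intro s
    have h1 : DifferentiableAt ℂ (lg s) z :=
      (hlghol s).differentiableAt (hUopen.mem_nhds hz)
    have h2 := h1.hasFDerivAt
    have h3 := h2.cexp
    have heq : (fun w => fF b w (J s)) =ᶠ[nhds z] fun w => Complex.exp (lg s w) :=
      Filter.eventuallyEq_of_mem (hUopen.mem_nhds hz) fun w hw => (hlg s w hw).symm
    have h4 : HasFDerivAt (fun w => fF b w (J s))
        (Complex.exp (lg s z) • fderiv ℂ (lg s) z) z := h3.congr_of_eventuallyEq heq
    have h5 : Complex.exp (lg s z) • fderiv ℂ (lg s) z = D s := h4.unique (hFd s)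
    have h6 : fderiv ℂ (lg s) z = (fF b z (J s))⁻¹ • D s := by
      rw [← h5, smul_smul, hlg s z hz, inv_mul_cancel₀ (hFz s), one_smul]
    rw [← h6]; exact h2
  have hterm : ∀ s : {s : Finset (Fin n) // s.card = (k' + 1) + 1}, HasFDerivAt
      (fun w => C s * (fF b w (J s)) ^ K * lg s w)
      (C s • ((fF b z (J s)) ^ K • ((fF b z (J s))⁻¹ • D s) +
        lg s z • (((K : ℂ) * fF b z (J s) ^ (K - 1)) • D s))) z := by
    intro s
    have hpow : HasFDerivAt (fun w => (fF b w (J s)) ^ K)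
        (((K : ℂ) * fF b z (J s) ^ (K - 1)) • D s) z :=
      by have := (hasDerivAt_pow K (fF b z (J s))).comp_hasFDerivAt z (hFd s); exact this
    have hfun : (fun w => C s * (fF b w (J s)) ^ K * lg s w)
        = fun w => C s * ((fF b w (J s)) ^ K * lg s w) := by funext w; ring
    rw [hfun]
    exact (hpow.mul (hlgd s)).const_mul (C s)
  have hL : HasFDerivAt (Lfun a b lg)
      ((((2 * (k' + 1)).factorial : ℂ))⁻¹ • ∑ s : {s : Finset (Fin n) // s.card = (k' + 1) + 1},
        (C s • ((fF b z (J s)) ^ K • ((fF b z (J s))⁻¹ • D s) +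
          lg s z • (((K : ℂ) * fF b z (J s) ^ (K - 1)) • D s)))) z := by
    have h1 : Lfun a b lg = fun w => (((2 * (k' + 1)).factorial : ℂ))⁻¹ *
        ∑ s : {s : Finset (Fin n) // s.card = (k' + 1) + 1}, C s * (fF b w (J s)) ^ K * lg s w := by
      funext w; rfl
    rw [h1]
    exact (HasFDerivAt.fun_sum fun s _ => hterm s).const_mul _
  rw [hL.fderiv]
  set β : {s : Finset (Fin n) // s.card = (k' + 1) + 1} → ℂ := fun s => C s * (fF b z (J s) ^ K * (fF b z (J s))⁻¹ +
    lg s z * ((K : ℂ) * fF b z (J s) ^ (K - 1))) with hβ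
  have happ : ∀ (s : {s : Finset (Fin n) // s.card = (k' + 1) + 1}) (v : Fin n → ℂ), (D s) v = ∑ l : Fin (k' + 2), c s l * v (J s l) := by
    intro s v
    rw [hD]
    simp [ContinuousLinearMap.sum_apply, ContinuousLinearMap.smul_apply,
      ContinuousLinearMap.proj_apply, smul_eq_mul]
  have hEapp : ∀ (s : {s : Finset (Fin n) // s.card = (k' + 1) + 1}) (v : Fin n → ℂ),
      (C s • ((fF b z (J s)) ^ K • ((fF b z (J s))⁻¹ • D s) +
        lg s z • (((K : ℂ) * fF b z (J s) ^ (K - 1)) • D s))) v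
      = β s * (∑ l : Fin (k' + 2), c s l * v (J s l)) := by
    intro s v
    simp only [ContinuousLinearMap.smul_apply, ContinuousLinearMap.add_apply, smul_eq_mul,
      happ, hβ]
    ring
  have hinner : ∀ s : {s : Finset (Fin n) // s.card = (k' + 1) + 1}, ∑ j : Fin n, dd b (Fin.cons j I) *
      (∑ l : Fin (k' + 2), c s l * (Pi.single j 1 : Fin n → ℂ) (J s l)) = 0 := by
    intro s
    have hl : ∀ l : Fin (k' + 2), ∑ j : Fin n,
        dd b (Fin.cons j I) * (c s l * (Pi.single j 1 : Fin n → ℂ) (J s l))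
        = c s l * dd b (Fin.cons (J s l) I) := by
      intro l
      simp [Pi.single_apply, mul_ite, mul_one, mul_zero, Finset.sum_ite_eq, mul_comm]
    calc ∑ j : Fin n, dd b (Fin.cons j I) *
          (∑ l : Fin (k' + 2), c s l * (Pi.single j 1 : Fin n → ℂ) (J s l))
        = ∑ l : Fin (k' + 2), ∑ j : Fin n,
            dd b (Fin.cons j I) * (c s l * (Pi.single j 1 : Fin n → ℂ) (J s l)) := by
          simp only [Finset.mul_sum]; rw [Finset.sum_comm]
      _ = ∑ l : Fin (k' + 2), c s l * dd b (Fin.cons (J s l) I) := by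
          exact Finset.sum_congr rfl fun l _ => hl l
      _ = 0 := by
          simp only [hc]
          exact sumB b (J s) I
  have key : ∑ j : Fin n, dd b (Fin.cons j I) *
      (∑ s : {s : Finset (Fin n) // s.card = (k' + 1) + 1}, β s * (∑ l : Fin (k' + 2), c s l * (Pi.single j 1 : Fin n → ℂ) (J s l))) = 0 := by
    calc ∑ j : Fin n, dd b (Fin.cons j I) *
          (∑ s : {s : Finset (Fin n) // s.card = (k' + 1) + 1}, β s * (∑ l : Fin (k' + 2), c s l * (Pi.single j 1 : Fin n → ℂ) (J s l)))
        = ∑ s : {s : Finset (Fin n) // s.card = (k' + 1) + 1}, β s * ∑ j : Fin n, dd b (Fin.cons j I) *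
            (∑ l : Fin (k' + 2), c s l * (Pi.single j 1 : Fin n → ℂ) (J s l)) := by
          have step1 : ∀ j : Fin n, dd b (Fin.cons j I) *
              (∑ s : {s : Finset (Fin n) // s.card = (k' + 1) + 1},
                β s * (∑ l : Fin (k' + 2), c s l * (Pi.single j 1 : Fin n → ℂ) (J s l)))
              = ∑ s : {s : Finset (Fin n) // s.card = (k' + 1) + 1},
                β s * (dd b (Fin.cons j I) *
                  (∑ l : Fin (k' + 2), c s l * (Pi.single j 1 : Fin n → ℂ) (J s l))) := by
            intro j
            rw [Finset.mul_sum]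
            exact Finset.sum_congr rfl fun s _ => by ring
          rw [Finset.sum_congr rfl fun j _ => step1 j, Finset.sum_comm]
          exact Finset.sum_congr rfl fun s _ => by rw [← Finset.mul_sum]
      _ = 0 := by
          simp only [hinner, mul_zero, Finset.sum_const_zero]
  calc ∑ j : Fin n, dd b (Fin.cons j I) *
        (((((2 * (k' + 1)).factorial : ℂ))⁻¹ • ∑ s : {s : Finset (Fin n) // s.card = (k' + 1) + 1},
          (C s • ((fF b z (J s)) ^ K • ((fF b z (J s))⁻¹ • D s) +
            lg s z • (((K : ℂ) * fF b z (J s) ^ (K - 1)) • D s)))) (Pi.single j 1))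
      = ∑ j : Fin n, (((2 * (k' + 1)).factorial : ℂ))⁻¹ * (dd b (Fin.cons j I) *
          (∑ s : {s : Finset (Fin n) // s.card = (k' + 1) + 1}, β s * (∑ l : Fin (k' + 2), c s l * (Pi.single j 1 : Fin n → ℂ) (J s l)))) := by
        refine Finset.sum_congr rfl fun j _ => ?_
        simp only [ContinuousLinearMap.smul_apply, ContinuousLinearMap.sum_apply, smul_eq_mul,
          hEapp]
        ring
    _ = 0 := by
        rw [← Finset.mul_sum, key, mul_zero]
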